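/- Let C be an abelian category satisfying the minimal cover axiom. If an object X of C is indecomposable, then its minimal projective resolution, regarded as an object of the category Ch(C) of non-negative chain complexes in C, is indecomposable. -/

import Mathlib

open CategoryTheory CategoryTheory.Limits

universe v u

/-- `p : P ⟶ X` is a minimal projective cover. -/
def IsMinimalProjectiveCover {C : Type u} [Category.{v} C] {P X : C} (p : P ⟶ X) : Prop :=
  Projective P ∧ Epi p ∧ ∀ φ : P ⟶ P, φ ≫ p = p → IsIso φ

/-- A category satisfies the minimal cover axiom if every object admits a minimal
projective cover. -/
def HasMinimalCovers (C : Type u) [Category.{v} C] : Prop :=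
  ∀ X : C, ∃ (P : C) (p : P ⟶ X), IsMinimalProjectiveCover p

/-- A projective resolution is minimal if every endomorphism of the resolving complex
commuting with the augmentation map is an isomorphism. -/
def CategoryTheory.ProjectiveResolution.IsMinimal {C : Type u} [Category.{v} C]
    [HasZeroObject C] [HasZeroMorphisms C] {X : C} (R : ProjectiveResolution X) : Prop :=
  ∀ φ : R.complex ⟶ R.complex, φ ≫ R.π = R.π → IsIso φ

section Aux

variable {C : Type u} [Category.{v} C] [Abelian C] {X : C}

open HomologicalComplex

/-- If the homology of `B` vanishes in degree 0, then any chain map from `B` to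
`single₀ X` vanishes. -/
lemma aux_hom_to_single_zero {B : ChainComplex C ℕ} (hB : IsZero (B.homology 0))
    (ψ : B ⟶ (ChainComplex.single₀ C).obj X) : ψ = 0 := by
  have hex : B.ExactAt 0 := (B.exactAt_iff_isZero_homology 0).2 hB
  have hex' := (B.exactAt_iff' 1 0 0 (by simp) (by simp)).1 hex
  have hepi : Epi (B.d 1 0) := by
    have := (ShortComplex.exact_iff_epi _ (by simp; rfl)).1 hex'
    exact this
  apply HomologicalComplex.hom_ext
  intro n
  match n with
  | 0 =>
    show ψ.f 0 = 0
    rw [← cancel_epi (B.d 1 0)]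
    have h := ψ.comm 1 0
    simp only [HomologicalComplex.single_obj_d, comp_zero] at h
    exact h.symm.trans comp_zero.symm
  | n + 1 =>
    apply (isZero_single_obj_X (ComplexShape.down ℕ) 0 X (n + 1) (by simp)).eq_of_tgt

/-- Key lemma: if the minimal resolution decomposes as `A ⊞ B` and the degree-0 homology
of `B` vanishes, then `B` is zero. -/
lemma aux_isZero (R : ProjectiveResolution X) (hR : R.IsMinimal)
    {A B : ChainComplex C ℕ} (f : R.complex ≅ A ⊞ B)
    (hB : IsZero (B.homology 0)) : IsZero B := by
  have hψ : biprod.inr ≫ f.inv ≫ R.π = 0 := aux_hom_to_single_zero hB _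
  set e : R.complex ⟶ R.complex := f.hom ≫ biprod.fst ≫ biprod.inl ≫ f.inv with he
  set eB : R.complex ⟶ R.complex := f.hom ≫ biprod.snd ≫ biprod.inr ≫ f.inv with heB
  have htot : e + eB = 𝟙 R.complex := by
    rw [he, heB, ← Preadditive.comp_add]
    have h2 : biprod.fst ≫ biprod.inl ≫ f.inv + biprod.snd ≫ biprod.inr ≫ f.inv
        = (biprod.fst ≫ biprod.inl + biprod.snd ≫ biprod.inr) ≫ f.inv := by
      rw [Preadditive.add_comp, Category.assoc, Category.assoc]
    rw [h2, biprod.total, Category.id_comp, f.hom_inv_id]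
  have heBπ : eB ≫ R.π = 0 := by
    rw [heB]
    simp only [Category.assoc]
    rw [hψ]
    simp
  have heπ : e ≫ R.π = R.π := by
    have : (e + eB) ≫ R.π = R.π := by rw [htot, Category.id_comp]
    rwa [Preadditive.add_comp, heBπ, add_zero] at this
  have hiso : IsIso e := hR e heπ
  have hidem : e ≫ e = e := by
    rw [he]
    simp
  have he1 : e = 𝟙 R.complex := by
    rw [← cancel_epi e, Category.comp_id, hidem]
  have heB0 : eB = 0 := by
    have := htot
    rw [he1] at this
    simpa using (add_left_cancel (a := 𝟙 R.complex) (by rw [this, add_zero]) : eB = 0)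
  rw [IsZero.iff_id_eq_zero]
  have : (𝟙 B : B ⟶ B) = biprod.inr ≫ f.inv ≫ eB ≫ f.hom ≫ biprod.snd := by
    rw [heB]
    simp
  rw [this, heB0]
  simp

end Aux

/-- Let `C` be an abelian category satisfying the minimal cover axiom.
If an object `X` of `C` is indecomposable, then its minimal projective resolution is
indecomposable as an object of the category of non-negative chain complexes in `C`. -/
theorem indecomposable_minimal_projective_resolution_of_indecomposable
    (C : Type u) [Category.{v} C] [Abelian C] (hC : HasMinimalCovers C)
    (X : C) (hX : Indecomposable X)
    (R : ProjectiveResolution X) (hR : R.IsMinimal) :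
    Indecomposable R.complex := by
  classical
  set H := HomologicalComplex.homologyFunctor C (ComplexShape.down ℕ) 0 with hH
  have hq : IsIso (HomologicalComplex.homologyMap R.π 0) := by
    rw [← quasiIsoAt_iff_isIso_homologyMap]
    infer_instance
  -- the isomorphism `R.complex.homology 0 ≅ X`
  let isoH : R.complex.homology 0 ≅ X :=
    (asIso (HomologicalComplex.homologyMap R.π 0)) ≪≫
      HomologicalComplex.singleObjHomologySelfIso (ComplexShape.down ℕ) 0 X
  constructor
  · intro h
    exact hX.1 (((H.map_isZero h).of_iso isoH.symm))
  · intro Y Z g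
    have hYZ : IsZero (H.obj Y) ∨ IsZero (H.obj Z) := by
      apply hX.2 (H.obj Y) (H.obj Z)
      haveI : PreservesBinaryBiproducts H := preservesBinaryBiproducts_of_preservesBiproducts H
      exact isoH.symm ≪≫ H.mapIso g ≪≫ H.mapBiprod Y Z
    rcases hYZ with h | h
    · exact Or.inl (aux_isZero R hR (g ≪≫ biprod.braiding Y Z) h)
    · exact Or.inr (aux_isZero R hR g h)
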